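/- In the point-to-point function update problem with full-rank m×n matrix A, sparsity ε, and m > 2ε: if H is a 2ε×n matrix such that the code C_H is a maximally recoverable subcode of C_A (in particular H = SA for some 2ε×m matrix S), then for any two ε-sparse vectors E, Ê ∈ F_q^n, HE = HÊ implies AE = AÊ. Consequently there exists a valid decoding scheme achieving communication cost ℓ = 2ε. -/

import Mathlib

open Matrix

section Defs
variable {F : Type*} [Field F]

/-- Rank of the submatrix of `G` consisting of the columns indexed by `S`. -/
noncomputable def colRank {m α : Type*} [Fintype α] (G : Matrix m α F) (S : Finset α) : ℕ :=
  (G.submatrix id (fun j : S => (j : α))).rank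

/-- The row space of a matrix. -/
def rowSpan {m α : Type*} (G : Matrix m α F) : Submodule F (α → F) :=
  Submodule.span F (Set.range fun i => G i)

/-- Rank of the restriction (puncturing) of a code `C` to the coordinates in `S`. -/
noncomputable def restrRank {α : Type*} (C : Submodule F (α → F)) (S : Finset α) : ℕ :=
  Module.finrank F (C.map (LinearMap.funLeft F F (fun j : S => (j : α))))

/-- Shortening of a code on coordinates `α ⊕ β` to the coordinates `α`. -/
noncomputable def shortenSum {α β : Type*} (D : Submodule F ((α ⊕ β) → F)) :
    Submodule F (α → F) :=
  Submodule.map (LinearMap.funLeft F F Sum.inl)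
    (D ⊓ (⨅ j : β, LinearMap.ker
      (LinearMap.proj (R := F) (Sum.inr j) : ((α ⊕ β) → F) →ₗ[F] F)))

/-- A valid (zero-error, worst case) scheme for the point-to-point function-update problem. -/
def IsValidScheme [DecidableEq F] {n m ℓ : ℕ} (A : Matrix (Fin m) (Fin n) F)
    (H : Matrix (Fin ℓ) (Fin n) F) (ε : ℕ)
    (D : (Fin ℓ → F) → (Fin m → F) → (Fin m → F)) : Prop :=
  ∀ X E : Fin n → F, hammingNorm E ≤ ε →
    D (H.mulVec (X + E)) (A.mulVec X) = A.mulVec (X + E)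

end Defs

section Aux
open Submodule
variable {F : Type*} [Field F] {m' n' : ℕ}


theorem mulVec_eq_sum' (A : Matrix (Fin m') (Fin n') F) (v : Fin n' → F) :
    A.mulVec v = ∑ j, v j • Aᵀ j := by
  funext i
  simp [Matrix.mulVec, dotProduct, Finset.sum_apply, mul_comm]


theorem colRank_eq (G : Matrix (Fin m') (Fin n') F) (S : Finset (Fin n')) :
    colRank G S = (Gᵀ '' ↑S).finrank F := by
  rw [colRank, Matrix.rank_eq_finrank_span_cols]
  have h : Set.range (G.submatrix id fun j : S => (j : Fin n'))ᵀ = Gᵀ '' ↑S := by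
    ext x
    constructor
    · rintro ⟨j, rfl⟩; exact ⟨j, j.2, rfl⟩
    · rintro ⟨j, hj, rfl⟩; exact ⟨⟨j, hj⟩, rfl⟩
  unfold Set.finrank
  exact congrArg (fun s => Module.finrank F (span F s)) h

/-- If the column rank on `S` equals `#S`, the columns on `S` are "independent":
any vector supported on `S` in the kernel is zero. -/
theorem indep_of_colRank (G : Matrix (Fin m') (Fin n') F) (S : Finset (Fin n'))
    (h : colRank G S = S.card) :
    ∀ w : Fin n' → F, (∀ j ∉ S, w j = 0) → G.mulVec w = 0 → w = 0 := by
  intro w hsupp hker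
  have hli : LinearIndependent F (fun j : S => Gᵀ (j : Fin n')) := by
    rw [linearIndependent_iff_card_eq_finrank_span]
    have : Set.range (fun j : S => Gᵀ (j : Fin n')) = Gᵀ '' ↑S := by
      ext x; constructor
      · rintro ⟨j, rfl⟩; exact ⟨j, j.2, rfl⟩
      · rintro ⟨j, hj, rfl⟩; exact ⟨⟨j, hj⟩, rfl⟩
    rw [this, ← colRank_eq, h, Fintype.card_coe]
  have hsum : ∑ j : S, w (j : Fin n') • Gᵀ (j : Fin n') = 0 := by
    classical
    rw [show (∑ j : S, w (j : Fin n') • Gᵀ (j : Fin n')) = ∑ j ∈ S.attach, w (j:Fin n') • Gᵀ (j:Fin n') from rfl,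
      Finset.sum_attach S (fun j => w j • Gᵀ j), ← hker, mulVec_eq_sum']
    apply Finset.sum_subset (Finset.subset_univ S)
    intro j _ hj
    rw [hsupp j hj, zero_smul]
  have := Fintype.linearIndependent_iff.mp hli (fun j : S => w j) hsum
  funext j
  by_cases hj : j ∈ S
  · exact this ⟨j, hj⟩
  · exact hsupp j hj

theorem extend_indep [DecidableEq F] (A : Matrix (Fin m') (Fin n') F)
    (hA : (Set.range Aᵀ).finrank F = m') {k : ℕ} (hk : k < m') :
    ∀ (d : ℕ) (t : Finset (Fin m' → F)), ↑t ⊆ Set.range Aᵀ →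
      LinearIndependent F ((↑) : ↑t → (Fin m' → F)) → t.card + d = k →
      ∃ t' : Finset (Fin m' → F), t ⊆ t' ∧ ↑t' ⊆ Set.range Aᵀ ∧
        LinearIndependent F ((↑) : ↑t' → (Fin m' → F)) ∧ t'.card = k := by
  intro d
  induction d with
  | zero => intro t h1 h2 h3; exact ⟨t, Finset.Subset.refl t, h1, h2, by omega⟩
  | succ d ih =>
    intro t h1 h2 h3
    have hcard : t.card < m' := by omega
    have hex : ∃ x ∈ Set.range Aᵀ, x ∉ Submodule.span F (↑t : Set (Fin m' → F)) := by
      by_contra hcon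
      push_neg at hcon
      have hle : Submodule.span F (Set.range Aᵀ) ≤ Submodule.span F (↑t : Set (Fin m' → F)) :=
        Submodule.span_le.mpr hcon
      have h4 := Submodule.finrank_mono hle
      have h5 := finrank_span_finset_le_card (R := F) t
      unfold Set.finrank at hA h5
      omega
    obtain ⟨x, hxr, hxs⟩ := hex
    have hxt : x ∉ t := fun hxt => hxs (Submodule.subset_span hxt)
    have hli : LinearIndependent F ((↑) : ↑(insert x t) → (Fin m' → F)) := by
      have h6 := LinearIndepOn.id_insert (s := (↑t : Set (Fin m' → F))) h2 hxs
      exact (linearIndependent_equiv (Equiv.setCongr (Finset.coe_insert x t))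
        (f := (Subtype.val : ((insert x (↑t : Set (Fin m' → F))) : Set _) → _))).mpr h6
    refine (ih (insert x t) ?_ hli ?_).imp fun t' ⟨ha, hb, hc, hd⟩ =>
      ⟨(Finset.subset_insert x t).trans ha, hb, hc, hd⟩
    · rw [Finset.coe_insert]
      exact Set.insert_subset hxr h1
    · rw [Finset.card_insert_of_notMem hxt]; omega

theorem key_lemma [DecidableEq F] {n m ε : ℕ} (hε : 2 * ε < m)
    (A : Matrix (Fin m) (Fin n) F) (hA : A.rank = m)
    (H : Matrix (Fin (2 * ε)) (Fin n) F)
    (Smat : Matrix (Fin (2 * ε)) (Fin m) F) (hS : H = Smat * A)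
    (hmrsc : ∀ S : Finset (Fin n), S.card = 2 * ε → colRank A S = 2 * ε →
      colRank H S = 2 * ε)
    (v : Fin n → F) (hv : hammingNorm v ≤ 2 * ε) (hker : H.mulVec v = 0) :
    A.mulVec v = 0 := by
  classical
  have hAr : (Set.range Aᵀ).finrank F = m := by
    unfold Set.finrank
    show Module.finrank F (span F (Set.range A.col)) = m
    rw [← Matrix.rank_eq_finrank_span_cols, hA]
  set T : Finset (Fin n) := Finset.univ.filter (fun j => v j ≠ 0) with hT
  have hTcard : T.card ≤ 2 * ε := hv
  -- get a linearly independent spanning subset t₀ of the columns on T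
  obtain ⟨b, hb1, hb2, hb3⟩ := exists_linearIndependent F (Aᵀ '' ↑T)
  have hbfin : b.Finite := ((T.finite_toSet.image Aᵀ).subset hb1)
  set t₀ : Finset (Fin m → F) := hbfin.toFinset with ht₀
  have ht₀c : (↑t₀ : Set (Fin m → F)) = b := hbfin.coe_toFinset
  have ht₀li : LinearIndependent F ((↑) : ↑t₀ → (Fin m → F)) := by
    exact (linearIndependent_equiv (Equiv.setCongr ht₀c)
      (f := (Subtype.val : b → _))).mpr hb3
  have ht₀card : t₀.card ≤ 2 * ε := by
    have h1 : t₀.card = (↑t₀ : Set (Fin m → F)).finrank F :=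
      (finrank_span_finset_eq_card ht₀li).symm
    have h2 : (↑t₀ : Set (Fin m → F)).finrank F = (Aᵀ '' ↑T).finrank F := by
      unfold Set.finrank
      rw [ht₀c, hb2]
    have h3 : (Aᵀ '' ↑T).finrank F ≤ T.card := by
      rw [← Finset.coe_image (f := (Aᵀ : Fin n → Fin m → F))]
      exact le_trans (finrank_span_finset_le_card _) (Finset.card_image_le)
    omega
  -- extend to an independent set t of columns of size 2ε
  obtain ⟨t, htt₀, htr, htli, htcard⟩ :=
    extend_indep A hAr hε (2 * ε - t₀.card) t₀
      (by rw [ht₀c]; exact hb1.trans (Set.image_subset_range _ _)) ht₀li (by omega)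
  -- choose index preimages to get S
  have hmem : ∀ x ∈ t, ∃ j : Fin n, Aᵀ j = x := fun x hx => htr hx
  set S : Finset (Fin n) := t.attach.image (fun x => (hmem x.1 x.2).choose) with hSdef
  have hspec : ∀ x : {y // y ∈ t}, Aᵀ ((hmem x.1 x.2).choose) = x.1 :=
    fun x => (hmem x.1 x.2).choose_spec
  have himg : S.image Aᵀ = t := by
    ext y
    simp only [hSdef, Finset.mem_image (f := (Aᵀ : Fin n → Fin m → F)), Finset.mem_image, Finset.mem_attach]
    constructor
    · rintro ⟨j, ⟨x, -, rfl⟩, rfl⟩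
      rw [hspec x]; exact x.2
    · intro hy
      exact ⟨(hmem y hy).choose, ⟨⟨y, hy⟩, trivial, rfl⟩, hspec ⟨y, hy⟩⟩
  have hScard : S.card = 2 * ε := by
    have h1 : t.card ≤ S.card := by
      rw [← himg]; exact Finset.card_image_le
    have h2 : S.card ≤ t.attach.card := Finset.card_image_le
    rw [Finset.card_attach] at h2
    omega
  have hcrA : colRank A S = 2 * ε := by
    rw [colRank_eq, ← Finset.coe_image (f := (Aᵀ : Fin n → Fin m → F)), himg]
    unfold Set.finrank
    rw [finrank_span_finset_eq_card htli, htcard]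
  have hcrH := hmrsc S hScard hcrA
  -- injectivity of columns on S
  have hinj : Set.InjOn Aᵀ ↑S := by
    apply Finset.injOn_of_card_image_eq
    rw [himg, htcard, hScard]
  -- A.mulVec v lies in span of columns on T, hence in span of t
  have hmemspan : A.mulVec v ∈ Submodule.span F (↑t : Set (Fin m → F)) := by
    have h1 : A.mulVec v = ∑ j ∈ T, v j • Aᵀ j := by
      rw [mulVec_eq_sum']
      symm
      apply Finset.sum_subset (Finset.subset_univ T)
      intro j _ hj
      rw [hT] at hj
      simp only [Finset.mem_filter, Finset.mem_univ, true_and, not_not] at hj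
      rw [hj, zero_smul]
    rw [h1]
    have h2 : Submodule.span F (Aᵀ '' ↑T) ≤ Submodule.span F (↑t : Set (Fin m → F)) := by
      rw [← hb2, ← ht₀c]
      exact Submodule.span_mono (Finset.coe_subset.mpr htt₀)
    apply h2
    apply Submodule.sum_mem
    intro j hj
    exact Submodule.smul_mem _ _ (Submodule.subset_span (Set.mem_image_of_mem _ hj))
  obtain ⟨f, hf⟩ := mem_span_finset.mp hmemspan
  set w : Fin n → F := fun j => if j ∈ S then f (Aᵀ j) else 0 with hw
  have hwsupp : ∀ j ∉ S, w j = 0 := by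
    intro j hj; simp [hw, hj]
  have hAw : A.mulVec w = A.mulVec v := by
    have h1 : ∑ j : Fin n, w j • Aᵀ j = ∑ j ∈ S, w j • Aᵀ j := by
      symm
      apply Finset.sum_subset (Finset.subset_univ S)
      intro j _ hj
      rw [hwsupp j hj, zero_smul]
    have h2 : ∑ j ∈ S, w j • Aᵀ j = ∑ j ∈ S, f (Aᵀ j) • Aᵀ j :=
      Finset.sum_congr rfl (fun j hj => by rw [hw]; simp [hj])
    rw [mulVec_eq_sum', h1, h2, ← hf.2, ← himg]
    exact (Finset.sum_image (f := fun x => f x • x) (fun x hx y hy h => hinj hx hy h)).symm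
  have hHw : H.mulVec w = 0 := by
    rw [hS, ← Matrix.mulVec_mulVec, hAw, Matrix.mulVec_mulVec, ← hS, hker]
  have hw0 : w = 0 := indep_of_colRank H S (by rw [hcrH, hScard]) w hwsupp hHw
  rw [← hAw, hw0, Matrix.mulVec_zero]


end Aux
/-- achievability: if `C_H` is a `2ε`-dimensional MRSC of `C_A`
(in particular `H = S·A`), then `H` identifies `AE` from `HE` for `ε`-sparse errors,
and hence yields a valid scheme of communication cost `2ε`. -/
theorem mrsc_gives_valid_scheme {F : Type*} [Field F] [Fintype F] [DecidableEq F]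
    {n m ε : ℕ} (hm : m ≤ n) (hε : 2 * ε < m)
    (A : Matrix (Fin m) (Fin n) F) (hA : A.rank = m)
    (H : Matrix (Fin (2 * ε)) (Fin n) F)
    (hSA : ∃ Smat : Matrix (Fin (2 * ε)) (Fin m) F, H = Smat * A)
    (hmrsc : ∀ S : Finset (Fin n), S.card = 2 * ε → colRank A S = 2 * ε →
      colRank H S = 2 * ε) :
    (∀ E E' : Fin n → F, hammingNorm E ≤ ε → hammingNorm E' ≤ ε →
      H.mulVec E = H.mulVec E' → A.mulVec E = A.mulVec E') ∧
      ∃ D : (Fin (2 * ε) → F) → (Fin m → F) → (Fin m → F), IsValidScheme A H ε D := by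
  classical
  obtain ⟨Smat, hS⟩ := hSA
  have part1 : ∀ E E' : Fin n → F, hammingNorm E ≤ ε → hammingNorm E' ≤ ε →
      H.mulVec E = H.mulVec E' → A.mulVec E = A.mulVec E' := by
    intro E E' hE hE' heq
    have hnorm : hammingNorm (E - E') ≤ 2 * ε := by
      have h1 : hammingNorm (E - E') = hammingDist E E' :=
        by rw [hammingDist_comm, hammingDist_eq_hammingNorm, neg_add_eq_sub]
      have h2 : hammingDist E E' ≤ hammingDist E 0 + hammingDist 0 E' :=
        hammingDist_triangle E 0 E'
      rw [hammingDist_zero_right] at h2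
      have h3 : hammingDist (0 : Fin n → F) E' = hammingNorm E' := by
        rw [hammingDist_comm, hammingDist_zero_right]
      omega
    have hker : H.mulVec (E - E') = 0 := by
      rw [Matrix.mulVec_sub, heq, sub_self]
    have := key_lemma hε A hA H Smat hS hmrsc (E - E') hnorm hker
    rw [Matrix.mulVec_sub, sub_eq_zero] at this
    exact this
  refine ⟨part1, ?_⟩
  refine ⟨fun s y => y + A.mulVec (if h : ∃ e : Fin n → F,
    hammingNorm e ≤ ε ∧ H.mulVec e = s - Smat.mulVec y then h.choose else 0), ?_⟩
  intro X E hE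
  have hkey : H.mulVec (X + E) - Smat.mulVec (A.mulVec X) = H.mulVec E := by
    rw [Matrix.mulVec_mulVec, ← hS, Matrix.mulVec_add]
    abel
  have hex : ∃ e : Fin n → F, hammingNorm e ≤ ε ∧
      H.mulVec e = H.mulVec (X + E) - Smat.mulVec (A.mulVec X) := ⟨E, hE, hkey.symm⟩
  show (A *ᵥ X) + _ = _
  rw [dif_pos hex]
  obtain ⟨h1, h2⟩ := hex.choose_spec
  rw [part1 _ _ h1 hE (h2.trans hkey), ← Matrix.mulVec_add]
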